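/- Let P be an e-permutation of (d, f) with partition pair (S_D, S_F). Suppose a, b ∈ S_F with a < b and P a < P b, and let P' = P ∘ (swap a b) be the tuple obtained by interchanging the values of P at a and b. Then P' is an e-permutation of (d, f), the pair (S_D, S_F) is a partition pair for P', P' dominates P, and P' ≠ P. -/

import Mathlib

/-- `P` dominates `Q`: every partial sum `∑_{i ≤ j} P i` is at least the
corresponding partial sum of `Q`, and the total sums agree. -/
def Dominates {n : ℕ} (P Q : Fin n → ℚ) : Prop :=
  (∀ j : Fin n, ∑ i ∈ Finset.Iic j, Q i ≤ ∑ i ∈ Finset.Iic j, P i) ∧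
  (∑ i, P i = ∑ i, Q i)
/-- The multiset of values of a slope tuple. -/
def valMS {n : ℕ} (s : Fin n → ℚ) : Multiset ℚ :=
  Finset.univ.val.map s

/-- `P` is an `e`-permutation of `(d, f)`. -/
def IsEPerm {m k : ℕ} (d : Fin m → ℚ) (f : Fin k → ℚ) (e P : Fin (m + k) → ℚ) : Prop :=
  valMS P = valMS d + valMS f ∧
  Dominates P e ∧
  ∀ i : Fin (m + k), (P i < e i → P i ∈ valMS d) ∧ (e i < P i → P i ∈ valMS f)

/-- `(SD, SF)` is a partition pair for the `e`-permutation `P` of `(d, f)`. -/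
def IsPartitionPair {m k : ℕ} (d : Fin m → ℚ) (f : Fin k → ℚ) (e P : Fin (m + k) → ℚ)
    (SD SF : Finset (Fin (m + k))) : Prop :=
  Disjoint SD SF ∧ SD ∪ SF = Finset.univ ∧
  SD.val.map P = valMS d ∧ (∀ i ∈ SD, P i ≤ e i) ∧
  SF.val.map P = valMS f ∧ (∀ j ∈ SF, e j ≤ P j)

/-- `P` is `(SD, SF)`-sorted: its values along `SD` (in increasing index order)
are exactly `d 0, …, d (m-1)`, and similarly for `SF` and `f`. -/
def IsSortedPair {m k : ℕ} (d : Fin m → ℚ) (f : Fin k → ℚ) (P : Fin (m + k) → ℚ)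
    (SD SF : Finset (Fin (m + k))) : Prop :=
  ((SD.sort (· ≤ ·)).map P = List.ofFn d) ∧ ((SF.sort (· ≤ ·)).map P = List.ofFn f)

private lemma swap_mem_iff_aux {α : Type*} [DecidableEq α] {s : Finset α} {a b : α}
    (ha : a ∈ s) (hb : b ∈ s) (x : α) : Equiv.swap a b x ∈ s ↔ x ∈ s := by
  rcases eq_or_ne x a with rfl | hxa
  · simp [Equiv.swap_apply_left, ha, hb]
  rcases eq_or_ne x b with rfl | hxb
  · simp [Equiv.swap_apply_right, ha, hb]
  · rw [Equiv.swap_apply_of_ne_of_ne hxa hxb]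

/-- Swapping an out-of-order pair of values of `P` at indices in `SF` yields a strictly
larger `e`-permutation of `(d, f)` with the same partition pair. -/
theorem swap_in_SF {m k : ℕ} (d : Fin m → ℚ) (f : Fin k → ℚ) (e P : Fin (m + k) → ℚ)
    (hd : Antitone d) (hf : Antitone f) (he : Antitone e)
    (SD SF : Finset (Fin (m + k)))
    (hP : IsEPerm d f e P) (hpair : IsPartitionPair d f e P SD SF)
    (a b : Fin (m + k)) (ha : a ∈ SF) (hb : b ∈ SF) (hab : a < b) (hPab : P a < P b) :
    IsEPerm d f e (P ∘ Equiv.swap a b) ∧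
    IsPartitionPair d f e (P ∘ Equiv.swap a b) SD SF ∧
    Dominates (P ∘ Equiv.swap a b) P ∧
    P ∘ Equiv.swap a b ≠ P := by
  obtain ⟨hdisj, hunion, hSDmap, hSDle, hSFmapP, hSFge⟩ := hpair
  set σ := Equiv.swap a b with hσ
  have hne : a ≠ b := hab.ne
  have heaPa : e a ≤ P a := hSFge a ha
  have hebPb : e b ≤ P b := hSFge b hb
  have heba : e b ≤ e a := he hab.le
  have hPaf : P a ∈ valMS f := by
    rw [← hSFmapP]; exact Multiset.mem_map_of_mem P (Finset.mem_def.1 ha)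
  have hPbf : P b ∈ valMS f := by
    rw [← hSFmapP]; exact Multiset.mem_map_of_mem P (Finset.mem_def.1 hb)
  -- value multiset is unchanged
  have hmapuniv : valMS (P ∘ σ) = valMS P := by
    unfold valMS
    conv_rhs => rw [← Finset.map_univ_equiv σ]
    rw [Finset.map_val, Multiset.map_map]
    simp
  have hSFmap : SF.map σ.toEmbedding = SF := by
    ext x
    rw [Finset.mem_map_equiv]
    simpa [hσ] using swap_mem_iff_aux ha hb x
  have hSFval : SF.val.map (P ∘ σ) = SF.val.map P := by
    conv_rhs => rw [← hSFmap]
    rw [Finset.map_val, Multiset.map_map]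
    simp
  -- pointwise difference formula
  have hdiff : ∀ i, (P ∘ σ) i =
      P i + ((if i = a then P b - P a else 0) + (if i = b then P a - P b else 0)) := by
    intro i
    rcases eq_or_ne i a with rfl | hia
    · simp [hσ, Equiv.swap_apply_left, hne]
    rcases eq_or_ne i b with rfl | hib
    · simp [hσ, Equiv.swap_apply_right, hia]
    · simp [hσ, Equiv.swap_apply_of_ne_of_ne hia hib, hia, hib]
  have hsum : ∀ s : Finset (Fin (m + k)), ∑ i ∈ s, (P ∘ σ) i
      = ∑ i ∈ s, P i + ((if a ∈ s then P b - P a else 0) + (if b ∈ s then P a - P b else 0)) := by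
    intro s
    simp only [hdiff]
    rw [Finset.sum_add_distrib, Finset.sum_add_distrib, Finset.sum_ite_eq' s a,
      Finset.sum_ite_eq' s b]
  have hdomP : Dominates (P ∘ σ) P := by
    constructor
    · intro j
      rw [hsum]
      rcases le_or_gt b j with hbj | hbj
      · have haj : a ≤ j := hab.le.trans hbj
        simp only [Finset.mem_Iic, haj, hbj, if_true]
        linarith
      rcases le_or_gt a j with haj | haj
      · simp only [Finset.mem_Iic, haj, if_true, not_le.mpr hbj, if_false]
        linarith
      · simp only [Finset.mem_Iic, not_le.mpr haj, not_le.mpr (haj.trans hab), if_false]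
        linarith
    · rw [hsum]
      simp only [Finset.mem_univ, if_true]
      ring
  have hdomE : Dominates (P ∘ σ) e :=
    ⟨fun j => (hP.2.1.1 j).trans (hdomP.1 j), hdomP.2.trans hP.2.1.2⟩
  have habSD : ∀ i ∈ SD, (P ∘ σ) i = P i := by
    intro i hi
    have hia : i ≠ a := fun h => (Finset.disjoint_left.mp hdisj hi) (h ▸ ha)
    have hib : i ≠ b := fun h => (Finset.disjoint_left.mp hdisj hi) (h ▸ hb)
    simp [hσ, Equiv.swap_apply_of_ne_of_ne hia hib]
  refine ⟨⟨hmapuniv.trans hP.1, hdomE, ?_⟩, ⟨hdisj, hunion, ?_, ?_, hSFval.trans hSFmapP, ?_⟩,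
    hdomP, ?_⟩
  · intro i
    rcases eq_or_ne i a with rfl | hia
    · simp only [Function.comp_apply, hσ, Equiv.swap_apply_left]
      exact ⟨fun h => absurd h (by linarith), fun _ => hPbf⟩
    rcases eq_or_ne i b with rfl | hib
    · simp only [Function.comp_apply, hσ, Equiv.swap_apply_right]
      exact ⟨fun h => absurd h (by linarith), fun _ => hPaf⟩
    · simp only [Function.comp_apply, hσ, Equiv.swap_apply_of_ne_of_ne hia hib]
      exact hP.2.2 i
  · rw [Multiset.map_congr rfl fun i hi => habSD i (Finset.mem_def.2 hi)]
    exact hSDmap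
  · intro i hi
    rw [habSD i hi]
    exact hSDle i hi
  · intro j hj
    rcases eq_or_ne j a with rfl | hja
    · simp only [Function.comp_apply, hσ, Equiv.swap_apply_left]
      linarith
    rcases eq_or_ne j b with rfl | hjb
    · simp only [Function.comp_apply, hσ, Equiv.swap_apply_right]
      linarith
    · simp only [Function.comp_apply, hσ, Equiv.swap_apply_of_ne_of_ne hja hjb]
      exact hSFge j hj
  · intro h
    have := congrFun h a
    simp only [Function.comp_apply, hσ, Equiv.swap_apply_left] at this
    exact hPab.ne' this
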